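/- If a class 𝔽 of left R-modules is closed under direct summands and is precovering, then 𝔽 is closed under set-indexed direct sums. -/

import Mathlib

universe u

open TensorProduct CategoryTheory DirectSum

noncomputable section

/-- A class of left `R`-modules is precovering: every module admits a precover from the
class. -/
def IsPrecovering (R : Type u) [Ring R] (𝓕 : Set (ModuleCat.{u} R)) : Prop :=
  ∀ M : ModuleCat.{u} R, ∃ F ∈ 𝓕, ∃ p : F ⟶ M,
    ∀ F' ∈ 𝓕, ∀ q : F' ⟶ M, ∃ h : F' ⟶ F, h ≫ p = q

/-- A class of left `R`-modules is closed under direct summands (equivalently, retracts). -/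
def ClosedUnderSummands (R : Type u) [Ring R] (𝓕 : Set (ModuleCat.{u} R)) : Prop :=
  ∀ (F A : ModuleCat.{u} R), F ∈ 𝓕 →
    (∃ (i : A ⟶ F) (p : F ⟶ A), i ≫ p = 𝟙 A) → A ∈ 𝓕

/-- If a class of left `R`-modules is closed under direct summands and is precovering,
then it is closed under set-indexed direct sums. -/
theorem stmt0 (R : Type u) [Ring R] (𝓕 : Set (ModuleCat.{u} R))
    (hsummand : ClosedUnderSummands R 𝓕) (hpre : IsPrecovering R 𝓕)
    (ι : Type u) (M : ι → ModuleCat.{u} R) (hM : ∀ i, M i ∈ 𝓕) :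
    ModuleCat.of R (⨁ i, ↥(M i)) ∈ 𝓕 := by
  haveI := Classical.decEq ι
  obtain ⟨F, hF, p, hp⟩ := hpre (ModuleCat.of R (⨁ i, ↥(M i)))
  choose h hh using fun i =>
    hp (M i) (hM i) (ModuleCat.ofHom (DirectSum.lof R ι (fun i => ↥(M i)) i))
  refine hsummand F _ hF
    ⟨ModuleCat.ofHom (DirectSum.toModule R ι F (fun i => (h i).hom)), p, ?_⟩
  apply ModuleCat.hom_ext
  apply DirectSum.linearMap_ext R
  intro i
  ext x
  have h1 := LinearMap.congr_fun (congrArg ModuleCat.Hom.hom (hh i)) x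
  simp only [ModuleCat.hom_comp, ModuleCat.id_apply, LinearMap.comp_apply] at h1 ⊢
  simpa [ModuleCat.ofHom, DirectSum.toModule_lof] using DFunLike.congr_fun h1 _
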